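/- For every positive integer n there exists a 2-coloring of the edges of K_{n,n} in which every monochromatic path has at most 2⌈n/2⌉ vertices. Concretely: partition X into X₁, X₂ and Y into Y₁, Y₂ with |X₁| = |Y₁| = ⌈n/2⌉ and |X₂| = |Y₂| = ⌊n/2⌋; color all edges in [X₁,Y₁] and [X₂,Y₂] blue and all edges in [X₁,Y₂] and [X₂,Y₁] red. Then the longest monochromatic path has exactly 2⌈n/2⌉ vertices. -/

import Mathlib

open SimpleGraph Set

/-- Build a walk from a chain of adjacencies. -/
lemma exists_walk_from_chain {V : Type*} (G : SimpleGraph V) (f : ℕ → V) :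
    ∀ L : ℕ, (∀ i, i < L → G.Adj (f i) (f (i+1))) →
    ∃ p : G.Walk (f 0) (f L), p.support = (List.range (L+1)).map f
  | 0, _ => ⟨Walk.nil, by simp [List.range_succ]⟩
  | (L+1), h => by
      obtain ⟨p, hp⟩ := exists_walk_from_chain G f L (fun i hi => h i (by omega))
      refine ⟨p.concat (h L (by omega)), ?_⟩
      rw [Walk.support_concat, hp]
      simp [List.range_succ]

/-- Every vertex on a walk in a graph preserving `g` has the same `g`-value as the start. -/
lemma walk_support_const {V : Type*} {G : SimpleGraph V} {g : V → Bool}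
    (hg : ∀ u v, G.Adj u v → g u = g v) {u v : V} (p : G.Walk u v) :
    ∀ w ∈ p.support, g w = g u := by
  induction p with
  | nil => intro w hw; simp at hw; subst hw; rfl
  | cons h q ih =>
      intro w hw
      rw [Walk.support_cons, List.mem_cons] at hw
      rcases hw with rfl | hw
      · rfl
      · rw [ih w hw, ← hg _ _ h]

lemma mod_small {m x : ℕ} (h : x < 2 * m) : x % m = if x < m then x else x - m := by
  split
  · exact Nat.mod_eq_of_lt ‹_›
  · rw [Nat.mod_eq_sub_mod (by omega), Nat.mod_eq_of_lt (by omega)]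

lemma fiber_card_le {n m : ℕ} (hm : 0 < m) (hnm : n ≤ 2 * m)
    (g : Fin n ⊕ Fin n → Bool)
    (hg1 : ∀ x1 x2 : Fin n, g (.inl x1) = g (.inl x2) → (x1.1 < m ↔ x2.1 < m))
    (hg2 : ∀ y1 y2 : Fin n, g (.inr y1) = g (.inr y2) → (y1.1 < m ↔ y2.1 < m))
    (b : Bool) :
    (Finset.univ.filter (fun v => g v = b)).card ≤ 2 * m := by
  have key : ∀ x1 x2 : ℕ, x1 < n → x2 < n → (x1 < m ↔ x2 < m) → x1 % m = x2 % m → x1 = x2 := by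
    intro x1 x2 h1 h2 hiff hmod
    rw [mod_small (by omega), mod_small (by omega)] at hmod
    rcases Nat.lt_or_ge x1 m with h | h
    · simp [h, hiff.mp h] at hmod; exact hmod
    · have h' : ¬ x2 < m := fun hc => absurd (hiff.mpr hc) (by omega)
      simp [Nat.not_lt.mpr h, h'] at hmod; omega
  have := Finset.card_le_card_of_injOn
    (f := Sum.map (fun x : Fin n => (⟨x.1 % m, Nat.mod_lt _ hm⟩ : Fin m))
                  (fun y : Fin n => (⟨y.1 % m, Nat.mod_lt _ hm⟩ : Fin m)))
    (s := Finset.univ.filter (fun v => g v = b)) (t := Finset.univ)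
    (fun _ _ => Finset.mem_univ _) ?_
  · calc (Finset.univ.filter (fun v => g v = b)).card
        ≤ (Finset.univ : Finset (Fin m ⊕ Fin m)).card := this
      _ = 2 * m := by simp [Fintype.card_sum]; ring
  · intro u hu v hv huv
    simp only [Finset.coe_filter, Set.mem_setOf_eq, Finset.mem_univ, true_and] at hu hv
    cases u with
    | inl x1 => cases v with
      | inl x2 =>
          simp only [Sum.map_inl, Sum.inl.injEq, Fin.mk.injEq] at huv
          exact congrArg _ (Fin.ext (key _ _ x1.2 x2.2 (hg1 x1 x2 (hu.trans hv.symm)) huv))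
      | inr y2 => simp at huv
    | inr y1 => cases v with
      | inl x2 => simp at huv
      | inr y2 =>
          simp only [Sum.map_inr, Sum.inr.injEq, Fin.mk.injEq] at huv
          exact congrArg _ (Fin.ext (key _ _ y1.2 y2.2 (hg2 y1 y2 (hu.trans hv.symm)) huv))

lemma path_le_fiber {V : Type*} [Fintype V] [DecidableEq V] {G : SimpleGraph V} {g : V → Bool}
    (hg : ∀ u v, G.Adj u v → g u = g v) {u v : V} (p : G.Walk u v) (hp : p.IsPath) :
    p.length + 1 ≤ (Finset.univ.filter (fun w => g w = g u)).card := by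
  have hsub : p.support.toFinset ⊆ Finset.univ.filter (fun w => g w = g u) := by
    intro w hw
    simp only [List.mem_toFinset] at hw
    simp [walk_support_const hg p w hw]
  calc p.length + 1 = p.support.length := (Walk.length_support p).symm
    _ = p.support.toFinset.card := (List.toFinset_card_of_nodup ((Walk.isPath_def p).mp hp)).symm
    _ ≤ _ := Finset.card_le_card hsub

theorem extremal_coloring_for_paths (n : ℕ) (hn : 0 < n) :
    ∃ R B : SimpleGraph (Fin n ⊕ Fin n),
      R ⊔ B = completeBipartiteGraph (Fin n) (Fin n) ∧
      (∀ (K : SimpleGraph (Fin n ⊕ Fin n)), (K = R ∨ K = B) →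
        ∀ (u v : Fin n ⊕ Fin n) (p : K.Walk u v), p.IsPath →
          p.length + 1 ≤ 2 * ((n + 1) / 2)) ∧
      (∃ (K : SimpleGraph (Fin n ⊕ Fin n)), (K = R ∨ K = B) ∧
        ∃ (u v : Fin n ⊕ Fin n) (p : K.Walk u v), p.IsPath ∧
          p.length + 1 = 2 * ((n + 1) / 2)) := by
  set m := (n + 1) / 2 with hm_def
  have hm : 0 < m := by omega
  have hnm : n ≤ 2 * m := by omega
  have hmn : m ≤ n := by omega
  -- colour classifiers
  set c : Fin n ⊕ Fin n → Bool :=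
    Sum.elim (fun x => decide (x.1 < m)) (fun y => decide (y.1 < m)) with hc_def
  set d : Fin n ⊕ Fin n → Bool :=
    Sum.elim (fun x => decide (x.1 < m)) (fun y => decide (¬ y.1 < m)) with hd_def
  set B : SimpleGraph (Fin n ⊕ Fin n) :=
    { Adj := fun u v => (completeBipartiteGraph (Fin n) (Fin n)).Adj u v ∧ c u = c v,
      symm := ⟨fun u v h => ⟨(completeBipartiteGraph (Fin n) (Fin n)).symm.symm _ _ h.1, h.2.symm⟩⟩,
      loopless := ⟨fun u h => (completeBipartiteGraph (Fin n) (Fin n)).loopless.irrefl u h.1⟩ } with hB_def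
  set R : SimpleGraph (Fin n ⊕ Fin n) :=
    { Adj := fun u v => (completeBipartiteGraph (Fin n) (Fin n)).Adj u v ∧ d u = d v,
      symm := ⟨fun u v h => ⟨(completeBipartiteGraph (Fin n) (Fin n)).symm.symm _ _ h.1, h.2.symm⟩⟩,
      loopless := ⟨fun u h => (completeBipartiteGraph (Fin n) (Fin n)).loopless.irrefl u h.1⟩ } with hR_def
  refine ⟨R, B, ?_, ?_, ?_⟩
  · ext u v
    simp only [sup_adj, hB_def, hR_def]
    cases u <;> cases v <;>
      simp [hc_def, hd_def, completeBipartiteGraph, decide_eq_decide] <;> omega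
  · rintro K (rfl | rfl) u v p hp
    · have hpres : ∀ u v, R.Adj u v → d u = d v := fun _ _ h => h.2
      refine le_trans (path_le_fiber hpres p hp) ?_
      refine fiber_card_le hm hnm d ?_ ?_ _
      · intro x1 x2 h; simpa [hd_def, decide_eq_decide] using h
      · intro y1 y2 h; simp only [hd_def, Sum.elim_inr, decide_eq_decide] at h; tauto
    · have hpres : ∀ u v, B.Adj u v → c u = c v := fun _ _ h => h.2
      refine le_trans (path_le_fiber hpres p hp) ?_
      refine fiber_card_le hm hnm c ?_ ?_ _
      · intro x1 x2 h; simpa [hc_def, decide_eq_decide] using h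
      · intro y1 y2 h; simpa [hc_def, decide_eq_decide] using h
  · -- the long blue path
    refine ⟨B, Or.inr rfl, ?_⟩
    set f : ℕ → Fin n ⊕ Fin n := fun i =>
      if i % 2 = 0 then Sum.inl ⟨(i / 2) % n, Nat.mod_lt _ hn⟩
      else Sum.inr ⟨(i / 2) % n, Nat.mod_lt _ hn⟩ with hf_def
    have hidx : ∀ i, i < 2 * m → (i / 2) % n = i / 2 := fun i hi =>
      Nat.mod_eq_of_lt (by omega)
    have hadj : ∀ i, i < 2 * m - 1 → B.Adj (f i) (f (i + 1)) := by
      intro i hi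
      have h2 : (i+1) / 2 % n = (i+1)/2 := hidx _ (by omega)
      have h1 : i / 2 % n = i / 2 := hidx _ (by omega)
      rcases Nat.even_or_odd i with he | ho
      · have hmod : i % 2 = 0 := Nat.even_iff.mp he
        have hmod1 : (i+1) % 2 = 1 := by omega
        have hdiv : (i+1)/2 = i/2 := by omega
        refine ⟨?_, ?_⟩
        · simp [hf_def, hmod, hmod1, completeBipartiteGraph]
        · show c (f i) = c (f (i+1))
          simp only [hf_def]
          rw [if_pos hmod, if_neg (by omega)]
          simp only [hc_def, Sum.elim_inl, Sum.elim_inr]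
          rw [decide_eq_decide, h1, h2, hdiv]
      · have hmod : i % 2 = 1 := Nat.odd_iff.mp ho
        have hmod1 : (i+1) % 2 = 0 := by omega
        have hdiv : (i+1)/2 = i/2 + 1 := by omega
        have hlt : i / 2 + 1 < m := by omega
        have hlt2 : i / 2 < m := by omega
        refine ⟨?_, ?_⟩
        · simp [hf_def, hmod, hmod1, completeBipartiteGraph]
        · show c (f i) = c (f (i+1))
          simp only [hf_def]
          rw [if_neg (by omega), if_pos (by omega)]
          simp only [hc_def, Sum.elim_inl, Sum.elim_inr]
          rw [decide_eq_decide, h1, h2, hdiv]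
          omega
    obtain ⟨p, hp⟩ := exists_walk_from_chain B f (2 * m - 1) hadj
    refine ⟨f 0, f (2 * m - 1), p, ?_, ?_⟩
    · rw [Walk.isPath_def, hp]
      refine List.Nodup.map_on ?_ (List.nodup_range (n := _))
      intro i hi j hj hij
      rw [List.mem_range] at hi hj
      have hi' : i < 2 * m := by omega
      have hj' : j < 2 * m := by omega
      simp only [hf_def] at hij
      by_cases h1 : i % 2 = 0 <;> by_cases h2 : j % 2 = 0
      · rw [if_pos h1, if_pos h2, Sum.inl.injEq, Fin.mk.injEq, hidx i hi', hidx j hj'] at hij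
        omega
      · rw [if_pos h1, if_neg h2] at hij
        exact absurd hij (by simp)
      · rw [if_neg h1, if_pos h2] at hij
        exact absurd hij (by simp)
      · rw [if_neg h1, if_neg h2, Sum.inr.injEq, Fin.mk.injEq, hidx i hi', hidx j hj'] at hij
        omega
    · have hlen := congrArg List.length hp
      rw [Walk.length_support, List.length_map, List.length_range] at hlen
      omega
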